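/- Consider the scalar differential equation ċ(t) = k₁(η − c(t))^{1/3} with k₁ > 0 and real cube root. For any initial condition c(0) = s, the solution reaches η in finite time t_c = 3|η − s|^{2/3}/(2k₁) and remains equal to η for all t ≥ t_c (i.e., η is reached in finite time and is forward invariant). -/

import Mathlib

/-- The real (signed) cube root `x ↦ sign(x)·|x|^{1/3}`. -/
noncomputable def realCbrt (x : ℝ) : ℝ :=
  if 0 ≤ x then x ^ ((1 : ℝ) / 3) else -((-x) ^ ((1 : ℝ) / 3))

lemma realCbrt_sign_mul {a : ℝ} (ha : a ≠ 0) :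
    (SignType.sign a : ℝ) * realCbrt a = |a| ^ ((1 : ℝ) / 3) := by
  rcases lt_or_gt_of_ne ha with h | h
  · rw [realCbrt, if_neg (not_le.2 h), sign_neg h, abs_of_neg h]
    norm_num
  · rw [realCbrt, if_pos h.le, sign_pos h, abs_of_pos h]
    norm_num

lemma hasDerivAt_V {k₁ η : ℝ} {c : ℝ → ℝ} {t : ℝ}
    (hc : HasDerivAt c (k₁ * realCbrt (η - c t)) t) (ha : η - c t ≠ 0) :
    HasDerivAt (fun u => |η - c u| ^ ((2 : ℝ) / 3)) (-(2 * k₁ / 3)) t := by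
  set a := η - c t with ha_def
  have hy : HasDerivAt (fun u => η - c u) (-(k₁ * realCbrt a)) t := by
    exact hc.const_sub η
  have habs : HasDerivAt (fun u => |η - c u|)
      ((SignType.sign a : ℝ) * (-(k₁ * realCbrt a))) t :=
    (hasDerivAt_abs ha).comp t hy (h₂ := fun x => |x|)
  have hrpow : HasDerivAt (fun z : ℝ => z ^ ((2 : ℝ) / 3))
      ((2 : ℝ) / 3 * |a| ^ ((2 : ℝ) / 3 - 1)) |a| :=
    Real.hasDerivAt_rpow_const (Or.inl (abs_ne_zero.2 ha))
  have total := hrpow.comp t habs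
  have h1 := realCbrt_sign_mul ha
  have h2 : |a| ^ ((2 : ℝ) / 3 - 1) * |a| ^ ((1 : ℝ) / 3) = 1 := by
    rw [← Real.rpow_add (abs_pos.2 ha)]; norm_num
  have key : (2 : ℝ) / 3 * |a| ^ ((2 : ℝ) / 3 - 1) *
      ((SignType.sign a : ℝ) * (-(k₁ * realCbrt a))) = -(2 * k₁ / 3) := by
    linear_combination (-(2 / 3 : ℝ) * k₁ * |a| ^ ((2 : ℝ) / 3 - 1)) * h1 +
      (-(2 / 3 : ℝ) * k₁) * h2
  rw [key] at total
  simpa [Function.comp_def] using total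

lemma decay {k₁ η : ℝ} {c : ℝ → ℝ}
    (hode : ∀ t : ℝ, 0 ≤ t → HasDerivAt c (k₁ * realCbrt (η - c t)) t)
    {a b : ℝ} (ha : 0 ≤ a) (hab : a ≤ b)
    (hne : ∀ t ∈ Set.Icc a b, η - c t ≠ 0) :
    |η - c b| ^ ((2 : ℝ) / 3) = |η - c a| ^ ((2 : ℝ) / 3) - 2 * k₁ / 3 * (b - a) := by
  set g : ℝ → ℝ := fun t => |η - c t| ^ ((2 : ℝ) / 3) + 2 * k₁ / 3 * t with hg
  have hcC : ContinuousOn c (Set.Icc a b) := fun t ht =>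
    ((hode t (ha.trans ht.1)).continuousAt).continuousWithinAt
  have hcont : ContinuousOn g (Set.Icc a b) := by
    apply ContinuousOn.add
    · exact ((continuousOn_const.sub hcC).abs.rpow_const fun x _ => Or.inr (by norm_num))
    · exact continuousOn_const.mul continuousOn_id
  have hderiv : ∀ x ∈ Set.Ico a b, HasDerivWithinAt g 0 (Set.Ici x) x := by
    intro x hx
    have hV := hasDerivAt_V (hode x (ha.trans hx.1)) (hne x ⟨hx.1, hx.2.le⟩)
    have : HasDerivAt g (-(2 * k₁ / 3) + 2 * k₁ / 3 * 1) x :=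
      hV.add ((hasDerivAt_id x).const_mul (2 * k₁ / 3))
    have h0 : HasDerivAt g 0 x := by simpa using this
    exact h0.hasDerivWithinAt
  have := constant_of_has_deriv_right_zero hcont hderiv b ⟨hab, le_refl b⟩
  simp only [hg] at this
  linarith

/-- Any solution of `ċ(t) = k₁ (η − c(t))^{1/3}` (real cube root, `k₁ > 0`) with
`c(0) = s` reaches `η` at the finite time `t_c = 3 |η − s|^{2/3} / (2 k₁)` and
remains equal to `η` for all `t ≥ t_c`. -/
theorem finite_time_reach_and_invariance (k₁ η s : ℝ) (hk : 0 < k₁)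
    (c : ℝ → ℝ) (hc0 : c 0 = s)
    (hode : ∀ t : ℝ, 0 ≤ t → HasDerivAt c (k₁ * realCbrt (η - c t)) t) :
    let tc : ℝ := 3 * |η - s| ^ ((2 : ℝ) / 3) / (2 * k₁)
    c tc = η ∧ ∀ t : ℝ, tc ≤ t → c t = η := by
  intro tc
  have htc0 : 0 ≤ tc := by
    have : (0:ℝ) ≤ |η - s| ^ ((2 : ℝ) / 3) := Real.rpow_nonneg (abs_nonneg _) _
    positivity
  -- forward invariance of the zero set
  have inv : ∀ t1 : ℝ, 0 ≤ t1 → η - c t1 = 0 → ∀ t2, t1 ≤ t2 → η - c t2 = 0 := by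
    intro t1 ht1 hz t2 h12
    by_contra hne2
    set S := {t | t ∈ Set.Icc t1 t2 ∧ η - c t = 0} with hS
    have hcy : ContinuousOn (fun t => η - c t) (Set.Icc t1 t2) :=
      continuousOn_const.sub fun t ht =>
        ((hode t (ht1.trans ht.1)).continuousAt).continuousWithinAt
    have hScl : IsClosed S :=
      hcy.preimage_isClosed_of_isClosed isClosed_Icc isClosed_singleton
    have hSne : S.Nonempty := ⟨t1, ⟨le_refl _, h12⟩, hz⟩
    have hSbdd : BddAbove S := ⟨t2, fun x hx => hx.1.2⟩
    set t0 := sSup S with ht0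
    have ht0S : t0 ∈ S := hScl.csSup_mem hSne hSbdd
    have ht0lt : t0 < t2 := lt_of_le_of_ne ht0S.1.2 (by
      intro h; exact hne2 (h ▸ ht0S.2))
    have hpos2 : 0 < |η - c t2| ^ ((2 : ℝ) / 3) :=
      Real.rpow_pos_of_pos (abs_pos.2 hne2) _
    have hVcont : ContinuousAt (fun u => |η - c u| ^ ((2 : ℝ) / 3)) t0 := by
      apply ContinuousAt.rpow_const
      · exact (continuousAt_const.sub (hode t0 (ht1.trans ht0S.1.1)).continuousAt).abs
      · right; norm_num
    have hV0 : |η - c t0| ^ ((2 : ℝ) / 3) = 0 := by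
      rw [ht0S.2, abs_zero, Real.zero_rpow (by norm_num)]
    have ev1 : ∀ᶠ u in nhdsWithin t0 (Set.Ioi t0),
        |η - c u| ^ ((2 : ℝ) / 3) < |η - c t2| ^ ((2 : ℝ) / 3) := by
      have := hVcont.tendsto
      rw [hV0] at this
      exact (this.eventually_lt_const hpos2).filter_mono nhdsWithin_le_nhds
    have ev2 : ∀ᶠ u in nhdsWithin t0 (Set.Ioi t0), u ∈ Set.Ioc t0 t2 :=
      Filter.eventually_of_mem (Ioc_mem_nhdsGT ht0lt) fun x hx => hx
    obtain ⟨u, hu1, hu2⟩ := (ev1.and ev2).exists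
    have hu0 : 0 ≤ u := le_trans (ht1.trans ht0S.1.1) hu2.1.le
    have hneI : ∀ x ∈ Set.Icc u t2, η - c x ≠ 0 := by
      intro x hx hzx
      have hxS : x ∈ S := ⟨⟨(ht0S.1.1.trans hu2.1.le).trans hx.1, hx.2⟩, hzx⟩
      have : x ≤ t0 := le_csSup hSbdd hxS
      exact absurd (hu2.1.trans_le (hx.1.trans this)) (lt_irrefl t0)
    have hdec := decay hode hu0 hu2.2 hneI
    have hmn : 0 ≤ 2 * k₁ / 3 * (t2 - u) := by
      apply mul_nonneg
      · positivity
      · linarith [hu2.2]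
    linarith
  -- reaching zero by time tc
  have hzero : ∃ t ∈ Set.Icc (0:ℝ) tc, η - c t = 0 := by
    by_contra h
    push_neg at h
    have hdec := decay hode (le_refl 0) htc0 h
    rw [hc0] at hdec
    have htc_eq : 2 * k₁ / 3 * (tc - 0) = |η - s| ^ ((2 : ℝ) / 3) := by
      show 2 * k₁ / 3 * (3 * |η - s| ^ ((2 : ℝ) / 3) / (2 * k₁) - 0) = _
      field_simp [tc]
      ring
    rw [htc_eq] at hdec
    have hVtc : |η - c tc| ^ ((2 : ℝ) / 3) = 0 := by linarith
    have : |η - c tc| = 0 := by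
      by_contra habs
      have : (0:ℝ) < |η - c tc| := lt_of_le_of_ne (abs_nonneg _) (Ne.symm habs)
      exact absurd hVtc (ne_of_gt (Real.rpow_pos_of_pos this _))
    exact h tc ⟨htc0, le_refl tc⟩ (abs_eq_zero.1 this)
  obtain ⟨t, ht, hz⟩ := hzero
  have h1 : η - c tc = 0 := inv t ht.1 hz tc ht.2
  exact ⟨by linarith, fun u hu => by
    have := inv t ht.1 hz u (ht.2.trans hu); linarith⟩
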